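/- Suppose σ_i ≥ 1 for all 1 ≤ i ≤ r, and set σ_0 = 1. Then for every s with 1 < s ≤ r there exists a subset A ⊆ {0, 1, …, s−1} with 1 ∈ A and σ_s = Σ_{i∈A} σ_i. Moreover, if σ is slack, then A may be chosen with 0 ∉ A. -/

import Mathlib

open Finset

/-- The change-maker condition on `σ₁, …, σᵣ`:
`0 ≤ σ₁ ≤ 1` and `σ_{i−1} ≤ σ_i ≤ σ₁ + ⋯ + σ_{i−1} + 1` for `1 < i ≤ r`. -/
def ChangeMaker (r : ℤ) (σ : ℤ → ℤ) : Prop :=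
  0 ≤ σ 1 ∧ σ 1 ≤ 1 ∧ ∀ i, 1 < i → i ≤ r →
    σ (i - 1) ≤ σ i ∧ σ i ≤ (∑ j ∈ Finset.Icc 1 (i - 1), σ j) + 1

lemma icc_insert_top (a b : ℤ) (h : a ≤ b + 1) :
    Finset.Icc a (b + 1) = insert (b + 1) (Finset.Icc a b) := by
  ext x; simp only [Finset.mem_Icc, Finset.mem_insert]; omega

lemma key (r : ℤ) (hr : 1 ≤ r) (σ : ℤ → ℤ) (hcm : ChangeMaker r σ)
    (hpos : ∀ i, 1 ≤ i → i ≤ r → 1 ≤ σ i) (hσ0 : σ 0 = 1) :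
    ∀ m, 1 ≤ m → m ≤ r →
      ((∀ n, 1 ≤ n → n ≤ 1 + ∑ j ∈ Finset.Icc 1 m, σ j →
        ∃ A ⊆ Finset.Icc (0:ℤ) m, 1 ∈ A ∧ n = ∑ i ∈ A, σ i) ∧
      ((∀ t, 1 < t → t ≤ r → σ t ≠ 1 + ∑ j ∈ Finset.Icc 1 (t - 1), σ j) →
        ∀ n, 1 ≤ n → n ≤ ∑ j ∈ Finset.Icc 1 m, σ j →
        ∃ A ⊆ Finset.Icc (1:ℤ) m, 1 ∈ A ∧ n = ∑ i ∈ A, σ i)) := by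
  have hσ1 : σ 1 = 1 := le_antisymm hcm.2.1 (hpos 1 le_rfl hr)
  intro m
  refine Int.le_induction (motive := fun m _ => m ≤ r →
      ((∀ n, 1 ≤ n → n ≤ 1 + ∑ j ∈ Finset.Icc 1 m, σ j →
        ∃ A ⊆ Finset.Icc (0:ℤ) m, 1 ∈ A ∧ n = ∑ i ∈ A, σ i) ∧
      ((∀ t, 1 < t → t ≤ r → σ t ≠ 1 + ∑ j ∈ Finset.Icc 1 (t - 1), σ j) →
        ∀ n, 1 ≤ n → n ≤ ∑ j ∈ Finset.Icc 1 m, σ j →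
        ∃ A ⊆ Finset.Icc (1:ℤ) m, 1 ∈ A ∧ n = ∑ i ∈ A, σ i))) ?_ ?_ m
  · intro _
    have hIcc : Finset.Icc (1:ℤ) 1 = {1} := Finset.Icc_self 1
    constructor
    · intro n hn1 hn2
      rw [hIcc, Finset.sum_singleton, hσ1] at hn2
      rcases (by omega : n = 1 ∨ n = 2) with h | h
      · refine ⟨{1}, ?_, by simp, by simp [h, hσ1]⟩
        intro x hx; simp only [Finset.mem_singleton] at hx
        simp only [Finset.mem_Icc]; omega
      · refine ⟨{0, 1}, ?_, by simp, ?_⟩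
        · intro x hx; simp only [Finset.mem_insert, Finset.mem_singleton] at hx
          simp only [Finset.mem_Icc]; omega
        · rw [Finset.sum_pair (by norm_num), hσ0, hσ1]; omega
    · intro _ n hn1 hn2
      rw [hIcc, Finset.sum_singleton, hσ1] at hn2
      have hn : n = 1 := by omega
      exact ⟨{1}, by rw [hIcc], by simp, by simp [hn, hσ1]⟩
  · intro m hm ih hmr
    have ihm := ih (by omega)
    have hsum : ∑ j ∈ Finset.Icc 1 (m + 1), σ j
        = σ (m + 1) + ∑ j ∈ Finset.Icc 1 m, σ j := by
      rw [icc_insert_top 1 m (by omega),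
        Finset.sum_insert (fun h => by simp only [Finset.mem_Icc] at h; omega)]
    have hcmub : σ (m + 1) ≤ (∑ j ∈ Finset.Icc 1 m, σ j) + 1 := by
      have := (hcm.2.2 (m + 1) (by omega) hmr).2
      simpa using this
    constructor
    · intro n hn1 hn2
      rw [hsum] at hn2
      by_cases hc : n ≤ 1 + ∑ j ∈ Finset.Icc 1 m, σ j
      · obtain ⟨A, hA, h1A, hsA⟩ := ihm.1 n hn1 hc
        exact ⟨A, hA.trans (Finset.Icc_subset_Icc_right (by omega)), h1A, hsA⟩
      · push_neg at hc
        obtain ⟨A, hA, h1A, hsA⟩ := ihm.1 (n - σ (m + 1)) (by omega) (by omega)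
        have hnot : (m + 1) ∉ A := by
          intro h; have := hA h; simp only [Finset.mem_Icc] at this; omega
        refine ⟨insert (m + 1) A, ?_, by simp [h1A], ?_⟩
        · intro x hx; simp only [Finset.mem_insert] at hx
          rcases hx with h | h
          · simp only [Finset.mem_Icc]; omega
          · have := hA h; simp only [Finset.mem_Icc] at this ⊢; omega
        · rw [Finset.sum_insert hnot, ← hsA]; ring
    · intro hslack n hn1 hn2
      rw [hsum] at hn2
      have hne := hslack (m + 1) (by omega) hmr
      simp only [add_sub_cancel_right] at hne
      have hub : σ (m + 1) ≤ ∑ j ∈ Finset.Icc 1 m, σ j := by omega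
      by_cases hc : n ≤ ∑ j ∈ Finset.Icc 1 m, σ j
      · obtain ⟨A, hA, h1A, hsA⟩ := ihm.2 hslack n hn1 hc
        exact ⟨A, hA.trans (Finset.Icc_subset_Icc_right (by omega)), h1A, hsA⟩
      · push_neg at hc
        obtain ⟨A, hA, h1A, hsA⟩ := ihm.2 hslack (n - σ (m + 1)) (by omega) (by omega)
        have hnot : (m + 1) ∉ A := by
          intro h; have := hA h; simp only [Finset.mem_Icc] at this; omega
        refine ⟨insert (m + 1) A, ?_, by simp [h1A], ?_⟩
        · intro x hx; simp only [Finset.mem_insert] at hx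
          rcases hx with h | h
          · simp only [Finset.mem_Icc]; omega
          · have := hA h; simp only [Finset.mem_Icc] at this ⊢; omega
        · rw [Finset.sum_insert hnot, ← hsA]; ring

/-- Suppose `σᵢ ≥ 1` for `1 ≤ i ≤ r` and `σ₀ = 1`.  For every `1 < s ≤ r`
there is `A ⊆ {0, 1, …, s−1}` with `1 ∈ A` and `σ_s = ∑_{i∈A} σᵢ`; moreover,
if `σ` is slack (no `σ_t` with `t > 1` is tight), `A` may be chosen with
`0 ∉ A`. -/
theorem stmt8 (r : ℤ) (hr : 1 ≤ r) (σ : ℤ → ℤ) (hcm : ChangeMaker r σ)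
    (hpos : ∀ i, 1 ≤ i → i ≤ r → 1 ≤ σ i) (hσ0 : σ 0 = 1)
    (s : ℤ) (hs1 : 1 < s) (hsr : s ≤ r) :
    (∃ A ⊆ Finset.Icc (0 : ℤ) (s - 1), 1 ∈ A ∧ σ s = ∑ i ∈ A, σ i) ∧
      ((∀ t, 1 < t → t ≤ r → σ t ≠ 1 + ∑ j ∈ Finset.Icc 1 (t - 1), σ j) →
        ∃ A ⊆ Finset.Icc (0 : ℤ) (s - 1), 1 ∈ A ∧ (0 : ℤ) ∉ A ∧
          σ s = ∑ i ∈ A, σ i) := by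
  have hk := key r hr σ hcm hpos hσ0 (s - 1) (by omega) (by omega)
  have hspos : 1 ≤ σ s := hpos s (by omega) hsr
  have hub : σ s ≤ (∑ j ∈ Finset.Icc 1 (s - 1), σ j) + 1 := (hcm.2.2 s hs1 hsr).2
  constructor
  · obtain ⟨A, hA, h1A, hsA⟩ := hk.1 (σ s) hspos (by omega)
    exact ⟨A, hA, h1A, hsA⟩
  · intro hslack
    have hne := hslack s hs1 hsr
    obtain ⟨A, hA, h1A, hsA⟩ := hk.2 hslack (σ s) hspos (by omega)
    refine ⟨A, hA.trans (Finset.Icc_subset_Icc_left (by omega)), h1A, ?_, hsA⟩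
    intro h0; have := hA h0; simp [Finset.mem_Icc] at this
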